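/- arXiv:1211.4381 — 2 statements merged into one kernel-verified Lean document; each statement's English description precedes it below -/
import Mathlib

section
/- For α₁ = α₂ = α ∈ [0,1], the DoF region D(α,α) contains the symmetric point ((2+α)/3, (2+α)/3) and this point maximizes d₁ + d₂ over D(α,α). -/
def DoF (a1 a2 : ℝ) : Set (ℝ × ℝ) :=
  {d | d.1 ≤ 1 ∧ d.2 ≤ 1 ∧ d.1 + 2*d.2 ≤ 2 + a2 ∧ 2*d.1 + d.2 ≤ 2 + a1}

theorem stmt9 (a : ℝ) (h0 : 0 ≤ a) (h1 : a ≤ 1) :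
    ((2 + a)/3, (2 + a)/3) ∈ DoF a a ∧
    ∀ d ∈ DoF a a, d.1 + d.2 ≤ (2 + a)/3 + (2 + a)/3 := by
  constructor
  · refine ⟨by linarith, by linarith, by ring_nf; linarith, by ring_nf; linarith⟩
  · rintro ⟨x, y⟩ ⟨_, _, h3, h4⟩
    simp only at *
    linarith
end

section
/- For 0 ≤ α₁ ≤ α₂ ≤ 1 with 2α₂ − α₁ ≤ 1, the nonnegative part of D(α₁,α₂) is the convex hull of the points (0,0), (1,0), (0,1), (1,α₁), (α₂,1), and ((2+2α₁−α₂)/3, (2+2α₂−α₁)/3). -/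
lemma combo3 {s : Set (ℝ × ℝ)} {x y z : ℝ × ℝ} (hx : x ∈ s) (hy : y ∈ s) (hz : z ∈ s)
    {a b c : ℝ} (ha : 0 ≤ a) (hb : 0 ≤ b) (hcc : 0 ≤ c) (hs : a + b + c = 1) :
    a • x + b • y + c • z ∈ convexHull ℝ s := by
  have h := Finset.centerMass_mem_convexHull (Finset.univ : Finset (Fin 3))
    (w := ![a, b, c]) (z := ![x, y, z])
    (by intro i _; fin_cases i <;> simpa)
    (by simp [Fin.sum_univ_three, hs])
    (by intro i _; fin_cases i <;> simpa)
  simpa [Finset.centerMass, Fin.sum_univ_three, hs, add_assoc] using h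

set_option maxHeartbeats 1600000 in
theorem stmt14 (a1 a2 : ℝ) (h0 : 0 ≤ a1) (h12 : a1 ≤ a2) (h2 : a2 ≤ 1)
    (hc : 2*a2 - a1 ≤ 1) :
    {d : ℝ × ℝ | d ∈ DoF a1 a2 ∧ 0 ≤ d.1 ∧ 0 ≤ d.2} =
      convexHull ℝ {((0:ℝ),(0:ℝ)), (1,0), (0,1), (1,a1), (a2,1),
        ((2 + 2*a1 - a2)/3, (2 + 2*a2 - a1)/3)} := by
  apply Set.Subset.antisymm
  · rintro ⟨x, y⟩ ⟨⟨h1, h2', h3, h4⟩, hx, hy⟩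
    simp only at h1 h2' h3 h4 hx hy
    have mO : ((0:ℝ),(0:ℝ)) ∈ ({((0:ℝ),(0:ℝ)), (1,0), (0,1), (1,a1), (a2,1),
        ((2 + 2*a1 - a2)/3, (2 + 2*a2 - a1)/3)} : Set (ℝ × ℝ)) := by simp
    have mA : ((1:ℝ),(0:ℝ)) ∈ ({((0:ℝ),(0:ℝ)), (1,0), (0,1), (1,a1), (a2,1),
        ((2 + 2*a1 - a2)/3, (2 + 2*a2 - a1)/3)} : Set (ℝ × ℝ)) := by simp
    have mB : ((0:ℝ),(1:ℝ)) ∈ ({((0:ℝ),(0:ℝ)), (1,0), (0,1), (1,a1), (a2,1),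
        ((2 + 2*a1 - a2)/3, (2 + 2*a2 - a1)/3)} : Set (ℝ × ℝ)) := by simp
    have mP : ((1:ℝ),a1) ∈ ({((0:ℝ),(0:ℝ)), (1,0), (0,1), (1,a1), (a2,1),
        ((2 + 2*a1 - a2)/3, (2 + 2*a2 - a1)/3)} : Set (ℝ × ℝ)) := by simp
    have mQ : ((a2:ℝ),(1:ℝ)) ∈ ({((0:ℝ),(0:ℝ)), (1,0), (0,1), (1,a1), (a2,1),
        ((2 + 2*a1 - a2)/3, (2 + 2*a2 - a1)/3)} : Set (ℝ × ℝ)) := by simp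
    have mR : (((2 + 2*a1 - a2)/3 : ℝ), ((2 + 2*a2 - a1)/3 : ℝ)) ∈
        ({((0:ℝ),(0:ℝ)), (1,0), (0,1), (1,a1), (a2,1),
        ((2 + 2*a1 - a2)/3, (2 + 2*a2 - a1)/3)} : Set (ℝ × ℝ)) := by simp
    rcases le_or_gt y (a1*x) with hcase1 | hA
    · -- triangle O, A, P
      rcases h0.eq_or_lt with ha1 | ha1
      · have hy0 : y = 0 := le_antisymm (by nlinarith) hy
        have hrep : ((x, y) : ℝ × ℝ) =
            (1-x) • ((0:ℝ),(0:ℝ)) + (x/2) • ((1:ℝ),(0:ℝ)) + (x/2) • ((1:ℝ),a1) := by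
          simp only [Prod.smul_mk, Prod.mk_add_mk, smul_eq_mul, Prod.mk.injEq]
          constructor <;> (try simp only [hy0, ← ha1]) <;> ring
        rw [hrep]
        exact combo3 mO mA mP (by linarith) (by linarith) (by linarith) (by ring)
      · have hne : a1 ≠ 0 := ne_of_gt ha1
        have w1n : 0 ≤ x - y/a1 := by
          rw [sub_nonneg, div_le_iff₀ ha1]; nlinarith
        have hrep : ((x, y) : ℝ × ℝ) =
            (1-x) • ((0:ℝ),(0:ℝ)) + (x - y/a1) • ((1:ℝ),(0:ℝ)) + (y/a1) • ((1:ℝ),a1) := by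
          simp only [Prod.smul_mk, Prod.mk_add_mk, smul_eq_mul, Prod.mk.injEq]
          constructor <;> (field_simp; try ring)
        rw [hrep]
        exact combo3 mO mA mP (by linarith) w1n (div_nonneg hy ha1.le) (by ring)
    · rcases le_or_gt x (a2*y) with hcase2 | hB
      · -- triangle O, B, Q
        rcases (le_trans h0 h12).eq_or_lt with ha2 | ha2
        · have hx0 : x = 0 := le_antisymm (by nlinarith) hx
          have hrep : ((x, y) : ℝ × ℝ) =
              (1-y) • ((0:ℝ),(0:ℝ)) + (y/2) • ((0:ℝ),(1:ℝ)) + (y/2) • ((a2:ℝ),(1:ℝ)) := by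
            simp only [Prod.smul_mk, Prod.mk_add_mk, smul_eq_mul, Prod.mk.injEq]
            constructor <;> (try simp only [hx0, ← ha2]) <;> ring
          rw [hrep]
          exact combo3 mO mB mQ (by linarith) (by linarith) (by linarith) (by ring)
        · have hne : a2 ≠ 0 := ne_of_gt ha2
          have w1n : 0 ≤ y - x/a2 := by
            rw [sub_nonneg, div_le_iff₀ ha2]; nlinarith
          have hrep : ((x, y) : ℝ × ℝ) =
              (1-y) • ((0:ℝ),(0:ℝ)) + (y - x/a2) • ((0:ℝ),(1:ℝ)) + (x/a2) • ((a2:ℝ),(1:ℝ)) := by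
            simp only [Prod.smul_mk, Prod.mk_add_mk, smul_eq_mul, Prod.mk.injEq]
            constructor <;> (field_simp; try ring)
          rw [hrep]
          exact combo3 mO mB mQ (by linarith) w1n (div_nonneg hx ha2.le) (by ring)
      · rcases le_total ((x+2*y)*(2+a1)) ((2*x+y)*(2+a2)) with hcmp | hcmp
        · -- triangle O, P, R
          have hden0 : 0 ≤ 1 + a2 - 2*a1 := by linarith
          rcases hden0.eq_or_lt with hdeg | hpos
          · exfalso
            have e1 : a1 = 1 := by linarith
            have e2 : a2 = 1 := by linarith
            rw [e1] at hA; rw [e2] at hB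
            nlinarith
          · have h2a1 : (0:ℝ) < 2 + a1 := by linarith
            have hne1 : (2 + a1 : ℝ) ≠ 0 := ne_of_gt h2a1
            have hne2 : (1 + a2 - 2*a1 : ℝ) ≠ 0 := ne_of_gt hpos
            have wOn : 0 ≤ 1 - (2*x+y)/(2+a1) := by
              rw [sub_nonneg, div_le_one h2a1]; exact h4
            have wRn : 0 ≤ 3*(y - a1*x)/((2+a1)*(1+a2-2*a1)) :=
              div_nonneg (by nlinarith) (by positivity)
            have key : 3*(y - a1*x) ≤ (2*x+y)*(1+a2-2*a1) := by nlinarith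
            have wPn : 0 ≤ (2*x+y)/(2+a1) - 3*(y - a1*x)/((2+a1)*(1+a2-2*a1)) := by
              rw [sub_nonneg, div_le_div_iff₀ (by positivity) h2a1]
              nlinarith [mul_le_mul_of_nonneg_left key h2a1.le]
            have hrep : ((x, y) : ℝ × ℝ) =
                (1 - (2*x+y)/(2+a1)) • ((0:ℝ),(0:ℝ)) +
                ((2*x+y)/(2+a1) - 3*(y - a1*x)/((2+a1)*(1+a2-2*a1))) • ((1:ℝ),a1) +
                (3*(y - a1*x)/((2+a1)*(1+a2-2*a1))) •
                  (((2 + 2*a1 - a2)/3 : ℝ), ((2 + 2*a2 - a1)/3 : ℝ)) := by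
              simp only [Prod.smul_mk, Prod.mk_add_mk, smul_eq_mul, Prod.mk.injEq]
              constructor <;> (field_simp; try ring)
            rw [hrep]
            exact combo3 mO mP mR wOn wPn wRn (by ring)
        · -- triangle O, Q, R
          have hden0 : 0 ≤ 1 + a1 - 2*a2 := by linarith
          rcases hden0.eq_or_lt with hdeg | hpos
          · exfalso
            have e1 : a1 = 2*a2 - 1 := by linarith
            rw [e1] at hcmp
            nlinarith
          · have h2a2 : (0:ℝ) < 2 + a2 := by linarith
            have hne1 : (2 + a2 : ℝ) ≠ 0 := ne_of_gt h2a2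
            have hne2 : (1 + a1 - 2*a2 : ℝ) ≠ 0 := ne_of_gt hpos
            have wOn : 0 ≤ 1 - (x+2*y)/(2+a2) := by
              rw [sub_nonneg, div_le_one h2a2]; exact h3
            have wRn : 0 ≤ 3*(x - a2*y)/((2+a2)*(1+a1-2*a2)) :=
              div_nonneg (by nlinarith) (by positivity)
            have key : 3*(x - a2*y) ≤ (x+2*y)*(1+a1-2*a2) := by nlinarith
            have wQn : 0 ≤ (x+2*y)/(2+a2) - 3*(x - a2*y)/((2+a2)*(1+a1-2*a2)) := by
              rw [sub_nonneg, div_le_div_iff₀ (by positivity) h2a2]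
              nlinarith [mul_le_mul_of_nonneg_left key h2a2.le]
            have hrep : ((x, y) : ℝ × ℝ) =
                (1 - (x+2*y)/(2+a2)) • ((0:ℝ),(0:ℝ)) +
                ((x+2*y)/(2+a2) - 3*(x - a2*y)/((2+a2)*(1+a1-2*a2))) • ((a2:ℝ),(1:ℝ)) +
                (3*(x - a2*y)/((2+a2)*(1+a1-2*a2))) •
                  (((2 + 2*a1 - a2)/3 : ℝ), ((2 + 2*a2 - a1)/3 : ℝ)) := by
              simp only [Prod.smul_mk, Prod.mk_add_mk, smul_eq_mul, Prod.mk.injEq]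
              constructor <;> (field_simp; try ring)
            rw [hrep]
            exact combo3 mO mQ mR wOn wQn wRn (by ring)
  · apply convexHull_min
    · intro p hp
      simp only [Set.mem_insert_iff, Set.mem_singleton_iff] at hp
      rcases hp with rfl | rfl | rfl | rfl | rfl | rfl <;>
        refine ⟨⟨?_, ?_, ?_, ?_⟩, ?_, ?_⟩ <;> dsimp only [DoF] <;> linarith
    · intro p hp q hq a b ha hb hab
      obtain ⟨⟨p1, p2, p3, p4⟩, p5, p6⟩ := hp
      obtain ⟨⟨q1, q2, q3, q4⟩, q5, q6⟩ := hq
      refine ⟨⟨?_, ?_, ?_, ?_⟩, ?_, ?_⟩ <;>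
        simp only [Prod.fst_add, Prod.snd_add, Prod.smul_fst, Prod.smul_snd,
          smul_eq_mul] <;>
        nlinarith [mul_le_mul_of_nonneg_left p1 ha, mul_le_mul_of_nonneg_left q1 hb,
          mul_le_mul_of_nonneg_left p2 ha, mul_le_mul_of_nonneg_left q2 hb,
          mul_le_mul_of_nonneg_left p3 ha, mul_le_mul_of_nonneg_left q3 hb,
          mul_le_mul_of_nonneg_left p4 ha, mul_le_mul_of_nonneg_left q4 hb,
          mul_nonneg ha p5, mul_nonneg hb q5, mul_nonneg ha p6, mul_nonneg hb q6]
end
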